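/- arXiv:2501.11180 — 2 statements merged into one kernel-verified Lean document; each statement's English description precedes it below -/
import Mathlib

section
/- For each i = 1, ..., d, let (X^i_1, ..., X^i_{n_i}) be a vector of indicator random variables with P(X^i_j = 1) = p_{i,j} ∈ (0,1), and set W_i = Σ_{j=1}^{n_i} X^i_j and λ_i = E(W_i) = Σ_{j=1}^{n_i} p_{i,j}. Suppose that for each i and each ℓ = 1, ..., n_i there is a random vector X^{i,(i,ℓ)} = ((X^{1,(i,ℓ)}_j)_{j=1}^{n_1}, ..., (X^{i-1,(i,ℓ)}_j)_{j=1}^{n_{i-1}}, (X^{i,(i,ℓ)}_j)_{j=1, j≠ℓ}^{n_i}), defined on the same probability space, whose law equals the conditional law of ((X^1_j)_{j=1}^{n_1}, ..., (X^{i-1}_j)_{j=1}^{n_{i-1}}, (X^i_j)_{j=1, j≠ℓ}^{n_i}) given X^i_ℓ = 1. Let I_1, ..., I_d be independent random variables, independent of all else, with P(I_i = j) = p_{i,j}/λ_i. Define W̃^i = (Σ_{j=1}^{n_1} X^{1,(i,I_i)}_j, ..., Σ_{j=1}^{n_{i-1}} X^{i-1,(i,I_i)}_j, Σ_{j=1,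 j≠I_i}^{n_i} X^{i,(i,I_i)}_j + 1). Then W̃ = (W̃^1, ..., W̃^d) is a size-biased coupling of W = (W_1, ..., W_d). -/
open MeasureTheory ProbabilityTheory Filter
open scoped ENNReal NNReal

/-- A triangular array `Wt = (Wt 1, ..., Wt d)`, where `Wt i` is an `(i+1)`-dimensional
random vector (indices `0, ..., i` in 0-based counting), is a *size-biased coupling* of the
random vector `W = (W 0, ..., W (d-1))` with means `lam` if for every `i` and every function
`f : ℝ^{i+1} → ℝ` with `E|W_i f(W_0, ..., W_i)| < ∞` one has
`E(W_i f(W_0, ..., W_i)) = lam i * E (f (Wt i))`. -/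
def IsSizeBiasedCoupling {Ω : Type*} [MeasurableSpace Ω] (μ : Measure Ω) {d : ℕ}
    (W : Fin d → Ω → ℕ) (lam : Fin d → ℝ)
    (Wt : (i : Fin d) → Ω → (Fin (i.1 + 1) → ℕ)) : Prop :=
  ∀ i : Fin d, ∀ f : (Fin (i.1 + 1) → ℝ) → ℝ,
    Integrable (fun ω => (W i ω : ℝ) * f fun j => (W (Fin.castLE i.isLt j) ω : ℝ)) μ →
    (∫ ω, (W i ω : ℝ) * f (fun j => (W (Fin.castLE i.isLt j) ω : ℝ)) ∂μ)
      = lam i * ∫ ω, f (fun j => (Wt i ω j : ℝ)) ∂μ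

/-- Codomain types for the joint family consisting of the indices `I i` together with all
the remaining data (the indicators `X` and the coupled indicators `X'`): `I i` has codomain
`Fin (n i)`, and the remaining data is bundled into a single pair. -/
def SBTarget {d : ℕ} (n : Fin d → ℕ) : Option (Fin d) → Type
  | Option.none => ((j : Fin d) → Fin (n j) → ℕ) ×
      ((i : Fin d) → Fin (n i) → (j : Fin d) → Fin (n j) → ℕ)
  | Option.some i => Fin (n i)

instance {d : ℕ} (n : Fin d → ℕ) (o : Option (Fin d)) : MeasurableSpace (SBTarget n o) := by
  cases o with
  | none => exact inferInstanceAs (MeasurableSpace (_ × _))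
  | some i => exact inferInstanceAs (MeasurableSpace (Fin (n i)))

/-- Restriction of a full array `Z = (Z j k)_{j,k}` to the components relevant for the pair
`(i, ℓ)`: the coordinates `(j, k)` with `j < i`, or `j = i` and `k ≠ ℓ`; the other
coordinates are set to `0`.  Equality of laws of restricted arrays expresses equality of the
joint laws of exactly these components. -/
def sbRestrict {d : ℕ} (n : Fin d → ℕ) (i : Fin d) (ℓ : Fin (n i))
    (Z : (j : Fin d) → Fin (n j) → ℕ) : (j : Fin d) → Fin (n j) → ℕ :=
  fun j k => if j.1 < i.1 ∨ (j.1 = i.1 ∧ k.1 ≠ ℓ.1) then Z j k else 0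

/-- The indicator-sum construction yields a size-biased coupling. -/
theorem isSizeBiasedCoupling_of_indicator_construction
    {Ω : Type*} [MeasurableSpace Ω] (μ : Measure Ω) [IsProbabilityMeasure μ]
    {d : ℕ} (n : Fin d → ℕ)
    (X : (j : Fin d) → Fin (n j) → Ω → ℕ)
    (p : (j : Fin d) → Fin (n j) → ℝ)
    (lam : Fin d → ℝ)
    (X' : (i : Fin d) → Fin (n i) → (j : Fin d) → Fin (n j) → Ω → ℕ)
    (I : (i : Fin d) → Ω → Fin (n i))
    (hXmeas : ∀ j k, Measurable (X j k))
    (hX'meas : ∀ i ℓ j k, Measurable (X' i ℓ j k))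
    (hImeas : ∀ i, Measurable (I i))
    -- the `X j k` are indicator random variables with `P(X j k = 1) = p j k ∈ (0,1)`
    (hind : ∀ j k ω, X j k ω ≤ 1)
    (hp : ∀ j k, 0 < p j k ∧ p j k < 1)
    (hpX : ∀ j k, μ {ω | X j k ω = 1} = ENNReal.ofReal (p j k))
    -- `lam i = E (W i) = ∑ k, p i k`
    (hlam : ∀ i, lam i = ∑ k, p i k)
    -- the law of the coupled array for `(i, ℓ)` is the conditional law given `X i ℓ = 1`
    (hlaw : ∀ (i : Fin d) (ℓ : Fin (n i)),
      Measure.map (fun ω => sbRestrict n i ℓ (fun j k => X' i ℓ j k ω)) μ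
        = Measure.map (fun ω => sbRestrict n i ℓ (fun j k => X j k ω))
            (μ[|{ω | X i ℓ ω = 1}]))
    -- `P(I i = j) = p i j / lam i`
    (hI : ∀ (i : Fin d) (j : Fin (n i)), μ {ω | I i ω = j} = ENNReal.ofReal (p i j / lam i))
    -- the `I i` are independent of each other and of all else
    (hindep : iIndepFun
      (fun o : Option (Fin d) => show Ω → SBTarget n o from
        match o with
        | Option.none => fun ω => (fun j k => X j k ω, fun i ℓ j k => X' i ℓ j k ω)
        | Option.some i => I i) μ) :
    IsSizeBiasedCoupling μ (fun j ω => ∑ k, X j k ω) lam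
      (fun i ω j =>
        if h : j.1 < i.1 then
          ∑ k : Fin (n ⟨j.1, lt_trans h i.isLt⟩), X' i (I i ω) ⟨j.1, lt_trans h i.isLt⟩ k ω
        else (∑ k ∈ Finset.univ.erase (I i ω), X' i (I i ω) i k ω) + 1) := by
  intro i f hf
  -- Ω is nonempty, hence `n i ≠ 0`
  have hΩ : Nonempty Ω := by
    by_contra h
    have h0 : μ Set.univ = 0 := by
      simp [Set.univ_eq_empty_iff.mpr (not_nonempty_iff.mp h)]
    simpa [h0] using (measure_univ (μ := μ))
  obtain ⟨ω0⟩ := hΩ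
  have hni : n i ≠ 0 := fun h => (h ▸ I i ω0).elim0
  haveI : Nonempty (Fin (n i)) := ⟨⟨0, Nat.pos_of_ne_zero hni⟩⟩
  have hlampos : 0 < lam i := by
    rw [hlam i]
    exact Finset.sum_pos (fun k _ => (hp i k).1) Finset.univ_nonempty
  have hlamne : lam i ≠ 0 := ne_of_gt hlampos
  -- the events `A ℓ = {X i ℓ = 1}`
  set A : Fin (n i) → Set Ω := fun ℓ => {ω | X i ℓ ω = 1} with hAdef
  have hA : ∀ ℓ, MeasurableSet (A ℓ) := fun ℓ =>
    (hXmeas i ℓ) (measurableSet_singleton 1)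
  have hμA : ∀ ℓ, μ (A ℓ) = ENNReal.ofReal (p i ℓ) := fun ℓ => hpX i ℓ
  -- the key functions `g ℓ`
  set g : Fin (n i) → ((j : Fin d) → Fin (n j) → ℕ) → ℝ := fun ℓ Z =>
    f (fun j => ((if h : j.1 < i.1 then ∑ k, Z ⟨j.1, lt_trans h i.isLt⟩ k
      else (∑ k ∈ Finset.univ.erase ℓ, Z i k) + 1 : ℕ) : ℝ)) with hgdef
  have hmg : ∀ ℓ, Measurable (g ℓ) := fun ℓ => measurable_of_countable _
  -- `g ℓ` only depends on the restricted coordinates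
  have hgR : ∀ ℓ Z, g ℓ (sbRestrict n i ℓ Z) = g ℓ Z := by
    intro ℓ Z
    simp only [hgdef]
    congr 1
    funext j
    by_cases h : j.1 < i.1
    · rw [dif_pos h, dif_pos h]
      congr 1
      refine Finset.sum_congr rfl fun k _ => ?_
      simp [sbRestrict, h]
    · rw [dif_neg h, dif_neg h]
      congr 2
      refine Finset.sum_congr rfl fun k hk => ?_
      have hk' : k.1 ≠ ℓ.1 := fun e => (Finset.ne_of_mem_erase hk) (Fin.ext e)
      simp [sbRestrict, hk']
  -- on the event `X i ℓ = 1`, `f` of the sums equals `g ℓ` of the array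
  have hAg : ∀ (ℓ : Fin (n i)) (ω : Ω), X i ℓ ω = 1 →
      f (fun j => ((∑ k, X (Fin.castLE i.isLt j) k ω : ℕ) : ℝ))
        = g ℓ (fun j k => X j k ω) := by
    intro ℓ ω hω
    simp only [hgdef]
    congr 1
    funext j
    by_cases h : j.1 < i.1
    · rw [dif_pos h]
      have : Fin.castLE i.isLt j = ⟨j.1, lt_trans h i.isLt⟩ := rfl
      rw [this]
    · rw [dif_neg h]
      have hj : Fin.castLE i.isLt j = i := by
        apply Fin.ext
        simpa using Nat.le_antisymm (Nat.le_of_lt_succ j.isLt) (Nat.le_of_not_lt h)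
      rw [hj]
      congr 1
      rw [← Finset.sum_erase_add Finset.univ _ (Finset.mem_univ ℓ), hω]
  -- the left-hand integrand, summand by summand
  have key1 : ∀ (ℓ : Fin (n i)) (ω : Ω),
      (X i ℓ ω : ℝ) * f (fun j => ((∑ k, X (Fin.castLE i.isLt j) k ω : ℕ) : ℝ))
        = Set.indicator (A ℓ) (fun ω => g ℓ (fun j k => X j k ω)) ω := by
    intro ℓ ω
    rcases Nat.le_one_iff_eq_zero_or_eq_one.mp (hind i ℓ ω) with h0 | h1
    · have : ω ∉ A ℓ := by simp [hAdef, h0]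
      simp [Set.indicator_of_notMem this, h0]
    · have : ω ∈ A ℓ := by simp [hAdef, h1]
      rw [Set.indicator_of_mem this, h1, ← hAg ℓ ω h1]
      simp
  -- measurability of the arrays
  have hXarrMeas : Measurable (fun ω => (fun j k => X j k ω :
      (j : Fin d) → Fin (n j) → ℕ)) := by
    refine measurable_pi_lambda _ fun j => measurable_pi_lambda _ fun k => hXmeas j k
  have hX'arrMeas : ∀ ℓ, Measurable (fun ω => (fun j k => X' i ℓ j k ω :
      (j : Fin d) → Fin (n j) → ℕ)) := fun ℓ =>
    measurable_pi_lambda _ fun j => measurable_pi_lambda _ fun k => hX'meas i ℓ j k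
  have hRmeas : ∀ (Y : Ω → (j : Fin d) → Fin (n j) → ℕ), Measurable Y →
      ∀ ℓ, Measurable (fun ω => sbRestrict n i ℓ (Y ω)) := by
    intro Y hY ℓ
    refine measurable_pi_lambda _ fun j => measurable_pi_lambda _ fun k => ?_
    simp only [sbRestrict]
    split
    · exact (measurable_pi_apply k).comp ((measurable_pi_apply j).comp hY)
    · exact measurable_const
  -- integrability of the indicator summands
  have hintX : ∀ ℓ, Integrable
      (Set.indicator (A ℓ) (fun ω => g ℓ (fun j k => X j k ω))) μ := by
    intro ℓ
    refine hf.mono (((hmg ℓ).comp hXarrMeas).aestronglyMeasurable.indicator (hA ℓ)) ?_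
    filter_upwards with ω
    rw [← key1 ℓ ω, norm_mul, norm_mul]
    gcongr
    simp only [Real.norm_natCast]
    exact_mod_cast Finset.single_le_sum (f := fun k => X i k ω)
      (fun k _ => Nat.zero_le _) (Finset.mem_univ ℓ)
  -- the measure-theoretic transfer, per ℓ
  have hc : ∀ ℓ, (μ (A ℓ)) ≠ 0 ∧ (μ (A ℓ)) ≠ ⊤ := by
    intro ℓ
    rw [hμA ℓ]
    exact ⟨by simp [ENNReal.ofReal_eq_zero, not_le, (hp i ℓ).1], ENNReal.ofReal_ne_top⟩
  have hcond : ∀ ℓ, (μ[|A ℓ]) = (μ (A ℓ))⁻¹ • μ.restrict (A ℓ) := fun ℓ => rfl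
  have transfer : ∀ ℓ,
      (∫ ω, Set.indicator (A ℓ) (fun ω => g ℓ (fun j k => X j k ω)) ω ∂μ)
          = p i ℓ * ∫ ω, g ℓ (fun j k => X' i ℓ j k ω) ∂μ
        ∧ Integrable (fun ω => g ℓ (fun j k => X' i ℓ j k ω)) μ := by
    intro ℓ
    have hres : IntegrableOn (fun ω => g ℓ (fun j k => X j k ω)) (A ℓ) μ :=
      (integrable_indicator_iff (hA ℓ)).mp (hintX ℓ)
    have hcondInt : Integrable (fun ω => g ℓ (fun j k => X j k ω)) (μ[|A ℓ]) := by
      rw [hcond ℓ]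
      exact hres.smul_measure (ENNReal.inv_ne_top.mpr (hc ℓ).1)
    -- rewrite through the restriction
    have hrw1 : (fun ω => g ℓ (fun j k => X j k ω))
        = fun ω => g ℓ (sbRestrict n i ℓ (fun j k => X j k ω)) := by
      funext ω; rw [hgR]
    have hrw2 : (fun ω => g ℓ (fun j k => X' i ℓ j k ω))
        = fun ω => g ℓ (sbRestrict n i ℓ (fun j k => X' i ℓ j k ω)) := by
      funext ω; rw [hgR]
    have hcondInt' : Integrable
        (fun ω => g ℓ (sbRestrict n i ℓ (fun j k => X j k ω))) (μ[|A ℓ]) := by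
      rw [← hrw1]; exact hcondInt
    have hmapInt : Integrable (g ℓ)
        (Measure.map (fun ω => sbRestrict n i ℓ (fun j k => X j k ω)) (μ[|A ℓ])) :=
      (integrable_map_measure (hmg ℓ).aestronglyMeasurable
        (hRmeas _ hXarrMeas ℓ).aemeasurable).mpr hcondInt'
    have hmapInt' : Integrable (g ℓ)
        (Measure.map (fun ω => sbRestrict n i ℓ (fun j k => X' i ℓ j k ω)) μ) := by
      rw [hlaw i ℓ]; exact hmapInt
    have hX'int : Integrable (fun ω => g ℓ (fun j k => X' i ℓ j k ω)) μ := by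
      rw [hrw2]
      exact (integrable_map_measure (hmg ℓ).aestronglyMeasurable
        (hRmeas _ (hX'arrMeas ℓ) ℓ).aemeasurable).mp hmapInt'
    refine ⟨?_, hX'int⟩
    have step1 : (∫ ω, Set.indicator (A ℓ) (fun ω => g ℓ (fun j k => X j k ω)) ω ∂μ)
        = ∫ ω, g ℓ (fun j k => X j k ω) ∂(μ.restrict (A ℓ)) :=
      integral_indicator (hA ℓ)
    have step2 : (∫ ω, g ℓ (fun j k => X j k ω) ∂(μ[|A ℓ]))
        = (μ (A ℓ)).toReal⁻¹ * ∫ ω, g ℓ (fun j k => X j k ω) ∂(μ.restrict (A ℓ)) := by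
      rw [hcond ℓ, integral_smul_measure, ENNReal.toReal_inv, smul_eq_mul]
    have step3 : (∫ ω, g ℓ (fun j k => X j k ω) ∂(μ[|A ℓ]))
        = ∫ ω, g ℓ (fun j k => X' i ℓ j k ω) ∂μ := by
      rw [hrw1, hrw2]
      have e1 : (∫ ω, g ℓ (sbRestrict n i ℓ (fun j k => X j k ω)) ∂(μ[|A ℓ]))
          = ∫ z, g ℓ z ∂(Measure.map
              (fun ω => sbRestrict n i ℓ (fun j k => X j k ω)) (μ[|A ℓ])) :=
        (integral_map (hRmeas _ hXarrMeas ℓ).aemeasurable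
          (hmg ℓ).aestronglyMeasurable).symm
      have e2 : (∫ ω, g ℓ (sbRestrict n i ℓ (fun j k => X' i ℓ j k ω)) ∂μ)
          = ∫ z, g ℓ z ∂(Measure.map
              (fun ω => sbRestrict n i ℓ (fun j k => X' i ℓ j k ω)) μ) :=
        (integral_map (hRmeas _ (hX'arrMeas ℓ) ℓ).aemeasurable
          (hmg ℓ).aestronglyMeasurable).symm
      rw [e1, e2, hlaw i ℓ]
    have htpos : (μ (A ℓ)).toReal = p i ℓ := by
      rw [hμA ℓ, ENNReal.toReal_ofReal (le_of_lt (hp i ℓ).1)]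
    have h4 : (∫ ω, g ℓ (fun j k => X j k ω) ∂(μ.restrict (A ℓ)))
        = (μ (A ℓ)).toReal * ∫ ω, g ℓ (fun j k => X j k ω) ∂(μ[|A ℓ]) := by
      rw [step2, ← mul_assoc,
        mul_inv_cancel₀ (by rw [htpos]; exact ne_of_gt (hp i ℓ).1), one_mul]
    rw [step1, h4, step3, htpos]
  set Q : Fin (n i) → ℝ := fun ℓ => ∫ ω, g ℓ (fun j k => X' i ℓ j k ω) ∂μ with hQdef
  -- the left-hand side
  have hL : (∫ ω, (↑(∑ k, X i k ω) : ℝ)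
        * f (fun j => ((∑ k, X (Fin.castLE i.isLt j) k ω : ℕ) : ℝ)) ∂μ)
      = ∑ ℓ, p i ℓ * Q ℓ := by
    have hpt : ∀ ω, (↑(∑ k, X i k ω) : ℝ)
        * f (fun j => ((∑ k, X (Fin.castLE i.isLt j) k ω : ℕ) : ℝ))
        = ∑ ℓ, Set.indicator (A ℓ) (fun ω => g ℓ (fun j k => X j k ω)) ω := by
      intro ω
      rw [Nat.cast_sum, Finset.sum_mul]
      exact Finset.sum_congr rfl fun ℓ _ => key1 ℓ ω
    calc (∫ ω, (↑(∑ k, X i k ω) : ℝ)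
          * f (fun j => ((∑ k, X (Fin.castLE i.isLt j) k ω : ℕ) : ℝ)) ∂μ)
        = ∫ ω, ∑ ℓ, Set.indicator (A ℓ) (fun ω => g ℓ (fun j k => X j k ω)) ω ∂μ := by
          exact integral_congr_ae (Filter.Eventually.of_forall hpt)
      _ = ∑ ℓ, ∫ ω, Set.indicator (A ℓ) (fun ω => g ℓ (fun j k => X j k ω)) ω ∂μ :=
          integral_finset_sum _ (fun ℓ _ => hintX ℓ)
      _ = ∑ ℓ, p i ℓ * Q ℓ := Finset.sum_congr rfl fun ℓ _ => (transfer ℓ).1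
  -- the right-hand side, pointwise
  have key2 : ∀ ω : Ω, f (fun j => ((if h : j.1 < i.1 then
          ∑ k : Fin (n ⟨j.1, lt_trans h i.isLt⟩), X' i (I i ω) ⟨j.1, lt_trans h i.isLt⟩ k ω
        else (∑ k ∈ Finset.univ.erase (I i ω), X' i (I i ω) i k ω) + 1 : ℕ) : ℝ))
      = ∑ ℓ, (if I i ω = ℓ then (1:ℝ) else 0) * g ℓ (fun j k => X' i ℓ j k ω) := by
    intro ω
    rw [Finset.sum_eq_single (I i ω)
      (fun b _ hb => by simp [Ne.symm hb])
      (fun h => absurd (Finset.mem_univ _) h)]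
    rw [if_pos rfl, one_mul]
  -- independence of the indicator of `I i = ℓ` and the coupled array
  haveI hCnt : Countable (SBTarget n Option.none) := inferInstanceAs (Countable (_ × _))
  haveI hMSC : MeasurableSingletonClass (SBTarget n Option.none) :=
    inferInstanceAs (MeasurableSingletonClass (_ × _))
  have hmInd : ∀ ℓ : Fin (n i), Measurable (fun ω => if I i ω = ℓ then (1:ℝ) else 0) :=
    fun ℓ => (measurable_of_countable (fun x : Fin (n i) => if x = ℓ then (1:ℝ) else 0)).comp
      (hImeas i)
  have hIndep : ∀ ℓ : Fin (n i), IndepFun (fun ω => if I i ω = ℓ then (1:ℝ) else 0)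
      (fun ω => g ℓ (fun j k => X' i ℓ j k ω)) μ := by
    intro ℓ
    have h := hindep.indepFun (i := Option.some i) (j := Option.none) (by simp)
    have h2 := h.comp (φ := fun x : Fin (n i) => if x = ℓ then (1:ℝ) else 0)
      (ψ := fun x : SBTarget n Option.none => g ℓ (fun j k => x.2 i ℓ j k))
      (show Measurable[instMeasurableSpaceSBTarget n (Option.some i)]
        (fun x : Fin (n i) => if x = ℓ then (1:ℝ) else 0) from
        fun s _ => MeasurableSpace.measurableSet_top) (measurable_of_countable _)
    exact h2
  have hQint : ∀ ℓ, Integrable (fun ω => g ℓ (fun j k => X' i ℓ j k ω)) μ :=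
    fun ℓ => (transfer ℓ).2
  have hprodInt : ∀ ℓ : Fin (n i), Integrable
      (fun ω => (if I i ω = ℓ then (1:ℝ) else 0) * g ℓ (fun j k => X' i ℓ j k ω)) μ := by
    intro ℓ
    refine (hQint ℓ).bdd_mul (hmInd ℓ).aestronglyMeasurable (c := 1) (Filter.Eventually.of_forall fun ω => ?_)
    split <;> simp
  have hIint : ∀ ℓ : Fin (n i), (∫ ω, (if I i ω = ℓ then (1:ℝ) else 0) ∂μ)
      = p i ℓ / lam i := by
    intro ℓ
    have hs : MeasurableSet {ω | I i ω = ℓ} := (hImeas i) (measurableSet_singleton ℓ)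
    have hind' : (fun ω => if I i ω = ℓ then (1:ℝ) else 0)
        = Set.indicator {ω | I i ω = ℓ} 1 := by
      funext ω
      by_cases h : I i ω = ℓ <;> simp [Set.indicator_apply, h]
    rw [hind', integral_indicator_one hs, measureReal_def, hI i ℓ, ENNReal.toReal_ofReal
      (div_nonneg (le_of_lt (hp i ℓ).1) (le_of_lt hlampos))]
  -- the right-hand integral
  have hR : (∫ ω, f (fun j => ((if h : j.1 < i.1 then
          ∑ k : Fin (n ⟨j.1, lt_trans h i.isLt⟩), X' i (I i ω) ⟨j.1, lt_trans h i.isLt⟩ k ω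
        else (∑ k ∈ Finset.univ.erase (I i ω), X' i (I i ω) i k ω) + 1 : ℕ) : ℝ)) ∂μ)
      = ∑ ℓ, (p i ℓ / lam i) * Q ℓ := by
    calc (∫ ω, f (fun j => ((if h : j.1 < i.1 then
            ∑ k : Fin (n ⟨j.1, lt_trans h i.isLt⟩), X' i (I i ω) ⟨j.1, lt_trans h i.isLt⟩ k ω
          else (∑ k ∈ Finset.univ.erase (I i ω), X' i (I i ω) i k ω) + 1 : ℕ) : ℝ)) ∂μ)
        = ∫ ω, ∑ ℓ, (if I i ω = ℓ then (1:ℝ) else 0) * g ℓ (fun j k => X' i ℓ j k ω) ∂μ :=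
          integral_congr_ae (Filter.Eventually.of_forall key2)
      _ = ∑ ℓ, ∫ ω, (if I i ω = ℓ then (1:ℝ) else 0) * g ℓ (fun j k => X' i ℓ j k ω) ∂μ :=
          integral_finset_sum _ (fun ℓ _ => hprodInt ℓ)
      _ = ∑ ℓ, (p i ℓ / lam i) * Q ℓ := by
          refine Finset.sum_congr rfl fun ℓ _ => ?_
          have := (hIndep ℓ).integral_fun_mul_eq_mul_integral (hmInd ℓ).aestronglyMeasurable
            (((hmg ℓ).comp (hX'arrMeas ℓ)).aestronglyMeasurable)
          rw [hIint ℓ] at this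
          exact this
  have h2 : (∑ ℓ, p i ℓ * Q ℓ)
      = lam i * ∫ ω, f (fun j => ((if h : j.1 < i.1 then
          ∑ k : Fin (n ⟨j.1, lt_trans h i.isLt⟩), X' i (I i ω) ⟨j.1, lt_trans h i.isLt⟩ k ω
        else (∑ k ∈ Finset.univ.erase (I i ω), X' i (I i ω) i k ω) + 1 : ℕ) : ℝ)) ∂μ := by
    rw [hR, Finset.mul_sum]
    refine Finset.sum_congr rfl fun ℓ _ => ?_
    field_simp
  exact hL.trans h2
end

section
/- Let p = p(n) ∈ (0,1) satisfy p → 0 as n → ∞. Let H_1, ..., H_d be distinct graphs, each with 0 < v_{H_i} ≤ n vertices, e_{H_i} > 0 edges, and no isolated vertices, and let W_i be the number of copies of H_i in G(n,p). For i ∈ {2, ..., d} and j ∈ {1, ..., i−1}, there exists a constant C > 0 such that for all sufficiently large n, |Cov(W_i, W_j)| ≤ C · E(W_i) E(W_j) · Σ_{k ∈ K_{i,j}} p^{-k} n^{-ℓ_{k,i,j}}. -/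
open MeasureTheory ProbabilityTheory Filter
open scoped ENNReal NNReal

/-- The Bernoulli distribution on `Bool` with success probability `p`. -/
noncomputable def bernoulliB (p : ℝ) : Measure Bool :=
  ENNReal.ofReal p • Measure.dirac true + ENNReal.ofReal (1 - p) • Measure.dirac false

instance (p : ℝ) : IsFiniteMeasure (bernoulliB p) := by
  constructor
  simp only [bernoulliB, Measure.add_apply, Measure.smul_apply, smul_eq_mul]
  finiteness

/-- The sample space of the Erdős–Rényi random graph `G(n, p)`: one Boolean coordinate for
each potential edge (non-diagonal unordered pair) of the complete graph on `n` vertices. -/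
abbrev EdgeSpace (n : ℕ) := ({e : Sym2 (Fin n) // ¬ e.IsDiag} → Bool)

/-- The Erdős–Rényi measure: each potential edge is present independently with
probability `p`. -/
noncomputable def erMeasure (n : ℕ) (p : ℝ) : Measure (EdgeSpace n) :=
  Measure.pi fun _ => bernoulliB p

/-- The random graph determined by a point of the sample space. -/
def erGraph {n : ℕ} (ω : EdgeSpace n) : SimpleGraph (Fin n) :=
  SimpleGraph.fromEdgeSet {e | ∃ h : ¬ e.IsDiag, ω ⟨e, h⟩ = true}

/-- `B` is a copy of `H` in the complete graph `K_n`: a subgraph of `K_n`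
isomorphic to `H`. -/
def IsCopy {n : ℕ} {V : Type*} (H : SimpleGraph V)
    (B : (⊤ : SimpleGraph (Fin n)).Subgraph) : Prop :=
  Nonempty (B.coe ≃g H)

/-- The number of copies of `H` in `K_n` all of whose edges are present in `G`. -/
noncomputable def numCopies {n : ℕ} {V : Type*} (H : SimpleGraph V)
    (G : SimpleGraph (Fin n)) : ℕ :=
  Set.ncard {B : (⊤ : SimpleGraph (Fin n)).Subgraph | IsCopy H B ∧ B.edgeSet ⊆ G.edgeSet}

/-- The number of edges shared by two subgraphs of `K_n`. -/
noncomputable def sharedEdges {n : ℕ} (A B : (⊤ : SimpleGraph (Fin n)).Subgraph) : ℕ :=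
  (A ⊓ B).edgeSet.ncard

/-- The number of vertices incident to the edges shared by two subgraphs of `K_n`. -/
noncomputable def sharedVerts {n : ℕ} (A B : (⊤ : SimpleGraph (Fin n)).Subgraph) : ℕ :=
  (A ⊓ B).support.ncard

/-- `K_{i,j}`: the set of possible numbers `k ≥ 1` of shared edges between a copy of `Hi`
and a copy of `Hj` in `K_n`. -/
def sharedK {V W : Type*} (Hi : SimpleGraph V) (Hj : SimpleGraph W) (n : ℕ) : Set ℕ :=
  {k | 1 ≤ k ∧ ∃ A B : (⊤ : SimpleGraph (Fin n)).Subgraph,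
    IsCopy Hi A ∧ IsCopy Hj B ∧ sharedEdges A B = k}

/-- `ℓ_{k,i,j}`: the minimum number of vertices incident to `k` shared edges between a copy
of `Hi` and a copy of `Hj` in `K_n` (`0` if no such pair of copies exists, by the convention
`sInf ∅ = 0` in `ℕ`). -/
noncomputable def minSharedVerts {V W : Type*} (Hi : SimpleGraph V) (Hj : SimpleGraph W)
    (n k : ℕ) : ℕ :=
  sInf {m | ∃ A B : (⊤ : SimpleGraph (Fin n)).Subgraph,
    IsCopy Hi A ∧ IsCopy Hj B ∧ sharedEdges A B = k ∧ sharedVerts A B = m}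


/-! ### Auxiliary machinery -/

open Function
open scoped Classical

section Aux

/-! #### Measure-theoretic infrastructure -/

instance (n : ℕ) : MeasurableSingletonClass (EdgeSpace n) := by
  constructor
  intro x
  have : ({x} : Set (EdgeSpace n)) = ⋂ i, (fun ω => ω i) ⁻¹' {x i} := by
    ext y; simp [funext_iff, Set.mem_iInter]
  rw [this]
  exact MeasurableSet.iInter fun i => (measurable_pi_apply i) (measurableSet_singleton _)

lemma measurableSet_all {n : ℕ} (s : Set (EdgeSpace n)) : MeasurableSet s := by
  have : s = ⋃ x ∈ s, {x} := by simp
  rw [this]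
  exact MeasurableSet.biUnion (Set.to_countable s) fun x _ => measurableSet_singleton x

lemma bernoulliB_true {p : ℝ} : bernoulliB p {true} = ENNReal.ofReal p := by
  simp [bernoulliB, Measure.dirac_apply' _ (measurableSet_singleton _)]

lemma bernoulliB_univ {p : ℝ} (h0 : 0 ≤ p) (h1 : p ≤ 1) : bernoulliB p Set.univ = 1 := by
  simp [bernoulliB]
  rw [← ENNReal.ofReal_add h0 (by linarith)]
  norm_num

lemma erMeasure_allTrue {n : ℕ} {p : ℝ} (h0 : 0 ≤ p) (h1 : p ≤ 1)
    (S : Finset {e : Sym2 (Fin n) // ¬ e.IsDiag}) :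
    erMeasure n p {ω | ∀ e ∈ S, ω e = true} = ENNReal.ofReal p ^ S.card := by
  classical
  have hset : {ω : EdgeSpace n | ∀ e ∈ S, ω e = true}
      = Set.pi Set.univ (fun e => if e ∈ S then {true} else Set.univ) := by
    ext ω
    simp only [Set.mem_setOf_eq, Set.mem_pi, Set.mem_univ, forall_true_left]
    constructor
    · intro h e
      by_cases he : e ∈ S <;> simp [he, h e]
    · intro h e he
      have := h e
      simp [he] at this
      exact this
  rw [hset, erMeasure, Measure.pi_pi]
  have : ∀ e : {e : Sym2 (Fin n) // ¬ e.IsDiag},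
      bernoulliB p (if e ∈ S then {true} else Set.univ)
        = if e ∈ S then ENNReal.ofReal p else 1 := by
    intro e
    by_cases he : e ∈ S
    · simp [he, bernoulliB_true]
    · rw [if_neg he, if_neg he]; exact bernoulliB_univ h0 h1
  rw [Finset.prod_congr rfl fun e _ => this e]
  rw [Finset.prod_ite_mem, Finset.univ_inter, Finset.prod_const]

instance subgraphFinite (n : ℕ) : Finite ((⊤ : SimpleGraph (Fin n)).Subgraph) := by
  apply Finite.of_injective
    (fun B : (⊤ : SimpleGraph (Fin n)).Subgraph => (B.verts, B.Adj))
  intro A B h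
  simp only [Prod.mk.injEq] at h
  exact SimpleGraph.Subgraph.ext h.1 h.2

instance erFinite (n : ℕ) (q : ℝ) : IsFiniteMeasure (erMeasure n q) := by
  rw [erMeasure]; infer_instance

/-! #### Facts about copies -/

lemma IsCopy.verts_ncard {n v : ℕ} {H : SimpleGraph (Fin v)}
    {A : (⊤ : SimpleGraph (Fin n)).Subgraph} (h : IsCopy H A) : A.verts.ncard = v := by
  obtain ⟨φ⟩ := h
  rw [← Nat.card_coe_set_eq]
  rw [Nat.card_congr φ.toEquiv]
  simp [Nat.card_eq_fintype_card]

lemma IsCopy.edgeSet_ncard {n v : ℕ} {H : SimpleGraph (Fin v)}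
    {A : (⊤ : SimpleGraph (Fin n)).Subgraph} (h : IsCopy H A) :
    A.edgeSet.ncard = H.edgeSet.ncard := by
  obtain ⟨φ⟩ := h
  have h1 : A.edgeSet = Sym2.map (↑) '' A.coe.edgeSet :=
    (SimpleGraph.Subgraph.image_coe_edgeSet_coe A).symm
  rw [h1, Set.ncard_image_of_injective _ (Sym2.map.injective Subtype.val_injective)]
  rw [← Nat.card_coe_set_eq, ← Nat.card_coe_set_eq]
  exact Nat.card_congr φ.mapEdgeSet

/-- Every copy admits an embedding presentation. -/
lemma IsCopy.exists_emb {n v : ℕ} {H : SimpleGraph (Fin v)}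
    {A : (⊤ : SimpleGraph (Fin n)).Subgraph} (h : IsCopy H A) :
    ∃ g : Fin v → Fin n, Function.Injective g ∧ Set.range g = A.verts ∧
      (∀ x y, A.Adj (g x) (g y) ↔ H.Adj x y) := by
  obtain ⟨φ⟩ := h
  refine ⟨fun x => ↑(φ.symm x), ?_, ?_, ?_⟩
  · intro x y hxy
    have := Subtype.coe_injective hxy
    exact φ.symm.toEquiv.injective this
  · ext a
    constructor
    · rintro ⟨x, rfl⟩; exact (φ.symm x).2
    · intro ha; exact ⟨φ ⟨a, ha⟩, by simp⟩
  · intro x y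
    have := φ.symm.map_adj_iff (v := x) (w := y)
    rw [← this]
    rfl

/-- A copy is determined by an embedding presentation. -/
lemma copy_ext {n v : ℕ} {H : SimpleGraph (Fin v)}
    {A B : (⊤ : SimpleGraph (Fin n)).Subgraph} {g : Fin v → Fin n}
    (hA : Set.range g = A.verts ∧ (∀ x y, A.Adj (g x) (g y) ↔ H.Adj x y))
    (hB : Set.range g = B.verts ∧ (∀ x y, B.Adj (g x) (g y) ↔ H.Adj x y)) :
    A = B := by
  ext a b
  · rw [← hA.1, ← hB.1]
  · constructor
    · intro hadj
      have ha : a ∈ A.verts := A.edge_vert hadj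
      have hb : b ∈ A.verts := A.edge_vert hadj.symm
      rw [← hA.1] at ha hb
      obtain ⟨x, rfl⟩ := ha; obtain ⟨y, rfl⟩ := hb
      exact (hB.2 x y).mpr ((hA.2 x y).mp hadj)
    · intro hadj
      have ha : a ∈ B.verts := B.edge_vert hadj
      have hb : b ∈ B.verts := B.edge_vert hadj.symm
      rw [← hB.1] at ha hb
      obtain ⟨x, rfl⟩ := ha; obtain ⟨y, rfl⟩ := hb
      exact (hA.2 x y).mpr ((hB.2 x y).mp hadj)

/-! #### Counting lemmas -/

lemma count_inj_covering {n b ℓ : ℕ} (T : Finset (Fin n)) (hT : T.card = ℓ) :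
    (Finset.univ.filter
        (fun g : Fin b → Fin n => Injective g ∧ (↑T : Set (Fin n)) ⊆ Set.range g)).card
      ≤ b ^ ℓ * n ^ (b - ℓ) := by
  classical
  set Sg := Finset.univ.filter
      (fun g : Fin b → Fin n => Injective g ∧ (↑T : Set (Fin n)) ⊆ Set.range g) with hSg
  have hsub : Sg ⊆ (Finset.univ : Finset (↥T → Fin b)).biUnion
      (fun c => Finset.univ.filter (fun g : Fin b → Fin n => ∀ t : ↥T, g (c t) = ↑t)) := by
    intro g hg
    rw [hSg, Finset.mem_filter] at hg
    obtain ⟨-, -, hrange⟩ := hg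
    have hc : ∀ t : ↥T, ∃ x : Fin b, g x = ↑t := by
      intro t
      exact hrange t.2
    choose c hcspec using hc
    refine Finset.mem_biUnion.mpr ⟨c, Finset.mem_univ _, ?_⟩
    simp only [Finset.mem_filter, Finset.mem_univ, true_and]
    exact hcspec
  calc Sg.card ≤ _ := Finset.card_le_card hsub
    _ ≤ ∑ c : ↥T → Fin b, (Finset.univ.filter
          (fun g : Fin b → Fin n => ∀ t : ↥T, g (c t) = ↑t)).card :=
        Finset.card_biUnion_le
    _ ≤ ∑ _c : ↥T → Fin b, n ^ (b - ℓ) := by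
        apply Finset.sum_le_sum
        intro c _
        by_cases hcinj : Injective c
        · have : (Finset.univ.filter (fun g : Fin b → Fin n => ∀ t : ↥T, g (c t) = ↑t)).card
              ≤ Fintype.card ({x : Fin b // x ∉ Set.range c} → Fin n) := by
            apply Finset.card_le_card_of_injOn
              (fun g => (fun x => g ↑x : {x : Fin b // x ∉ Set.range c} → Fin n))
              (fun _ _ => Finset.mem_univ _)
            intro g hg g' hg' hgg'
            simp only [Finset.mem_coe, Finset.mem_filter] at hg hg'
            funext x
            by_cases hx : x ∈ Set.range c
            · obtain ⟨t, rfl⟩ := hx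
              rw [hg.2 t, hg'.2 t]
            · exact congrFun hgg' ⟨x, hx⟩
          refine this.trans ?_
          rw [Fintype.card_fun, Fintype.card_fin]
          have h1 : Fintype.card {x : Fin b // x ∈ Set.range c} = ℓ := by
            rw [← Nat.card_eq_fintype_card]
            have h2 : Nat.card {x : Fin b // x ∈ Set.range c} = Nat.card (Set.range c) := rfl
            rw [h2, Nat.card_range_of_injective hcinj, Nat.card_eq_fintype_card,
              Fintype.card_coe, hT]
          rw [Fintype.card_subtype_compl, h1, Fintype.card_fin]
        · have : (Finset.univ.filter (fun g : Fin b → Fin n => ∀ t : ↥T, g (c t) = ↑t)) = ∅ := by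
            rw [Finset.filter_eq_empty_iff]
            intro g _
            intro hgall
            apply hcinj
            intro t t' htt'
            have := (hgall t).symm.trans (htt' ▸ hgall t')
            exact Subtype.coe_injective this
          rw [this]
          simp
    _ = b ^ ℓ * n ^ (b - ℓ) := by
        rw [Finset.sum_const, Finset.card_univ, Fintype.card_fun, Fintype.card_coe,
          Fintype.card_fin, hT, smul_eq_mul]

/-- The subgraph of `K_n` obtained from an injection of the vertex set of `H`. -/
def embSubgraph {n b : ℕ} (H : SimpleGraph (Fin b)) (f : Fin b ↪ Fin n) :
    (⊤ : SimpleGraph (Fin n)).Subgraph where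
  verts := Set.range f
  Adj x y := ∃ a a', H.Adj a a' ∧ f a = x ∧ f a' = y
  adj_sub := by
    rintro x y ⟨a, a', hadj, rfl, rfl⟩
    simp only [SimpleGraph.top_adj]
    exact fun h => hadj.ne (f.injective h)
  edge_vert := by
    rintro x y ⟨a, a', hadj, rfl, rfl⟩
    exact ⟨a, rfl⟩
  symm := by
    constructor
    rintro x y ⟨a, a', hadj, rfl, rfl⟩
    exact ⟨a', a, hadj.symm, rfl, rfl⟩

lemma embSubgraph_adj {n b : ℕ} (H : SimpleGraph (Fin b)) (f : Fin b ↪ Fin n) (x y : Fin b) :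
    (embSubgraph H f).Adj (f x) (f y) ↔ H.Adj x y := by
  constructor
  · rintro ⟨a, a', hadj, ha, ha'⟩
    rwa [f.injective ha, f.injective ha'] at hadj
  · intro h; exact ⟨x, y, h, rfl, rfl⟩

lemma embSubgraph_isCopy {n b : ℕ} (H : SimpleGraph (Fin b)) (f : Fin b ↪ Fin n) :
    IsCopy H (embSubgraph H f) := by
  refine ⟨(⟨Equiv.ofInjective f f.injective, ?_⟩ : H ≃g (embSubgraph H f).coe).symm⟩
  intro a b
  exact embSubgraph_adj H f a b

/-- Lower bound on the number of copies of `H` in `K_n`. -/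
lemma copies_lower {n b : ℕ} (H : SimpleGraph (Fin b)) (hb : 0 < b) (hn : 2 * b ≤ n)
    (Γ : Finset ((⊤ : SimpleGraph (Fin n)).Subgraph))
    (hΓ : ∀ B, B ∈ Γ ↔ IsCopy H B) :
    n ^ b ≤ 2 ^ b * b ^ b * Γ.card := by
  have hverts : ∀ B ∈ Γ, B.verts.ncard = b := fun B hB => ((hΓ B).mp hB).verts_ncard
  have key : (Finset.univ : Finset (Fin b ↪ Fin n)).card
      ≤ b ^ b * ((Finset.univ : Finset (Fin b ↪ Fin n)).image (embSubgraph H)).card := by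
    apply Finset.card_le_mul_card_image
    intro B hB
    obtain ⟨f₀, -, rfl⟩ := Finset.mem_image.mp hB
    have hBcard : (embSubgraph H f₀).verts.ncard = b :=
      hverts _ ((hΓ _).mpr (embSubgraph_isCopy H f₀))
    have hne : (embSubgraph H f₀).verts.Nonempty := by
      apply Set.nonempty_of_ncard_ne_zero
      omega
    haveI : Fintype ↥(embSubgraph H f₀).verts := Fintype.ofFinite _
    have hinj : (Finset.univ.filter
        (fun f : Fin b ↪ Fin n => embSubgraph H f = embSubgraph H f₀)).card
        ≤ Fintype.card (Fin b → ↥(embSubgraph H f₀).verts) := by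
      apply Finset.card_le_card_of_injOn
        (fun f => (fun x => if h : f x ∈ (embSubgraph H f₀).verts then ⟨f x, h⟩
          else Classical.choice hne.to_subtype))
        (fun _ _ => Finset.mem_univ _)
      intro f hf f' hf' hff'
      simp only [Finset.coe_filter, Finset.mem_univ, true_and, Set.mem_setOf_eq] at hf hf'
      have hmem : ∀ x, f x ∈ (embSubgraph H f₀).verts := by
        intro x
        rw [← hf]
        exact Set.mem_range_self x
      have hmem' : ∀ x, f' x ∈ (embSubgraph H f₀).verts := by
        intro x
        rw [← hf']
        exact Set.mem_range_self x
      apply DFunLike.ext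
      intro x
      have := congrFun hff' x
      simp only [dif_pos (hmem x), dif_pos (hmem' x)] at this
      exact congrArg Subtype.val this
    refine hinj.trans ?_
    rw [Fintype.card_fun, Fintype.card_fin, ← Nat.card_eq_fintype_card,
      Nat.card_coe_set_eq, hBcard]
  have himage : (Finset.univ : Finset (Fin b ↪ Fin n)).image (embSubgraph H) ⊆ Γ := by
    intro B hB
    obtain ⟨f₀, -, rfl⟩ := Finset.mem_image.mp hB
    exact (hΓ _).mpr (embSubgraph_isCopy H f₀)
  calc n ^ b ≤ (2 * (n - b)) ^ b := Nat.pow_le_pow_left (by omega) b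
    _ = 2 ^ b * (n - b) ^ b := mul_pow 2 (n - b) b
    _ ≤ 2 ^ b * (n + 1 - b) ^ b :=
        Nat.mul_le_mul_left _ (Nat.pow_le_pow_left (by omega) b)
    _ ≤ 2 ^ b * n.descFactorial b :=
        Nat.mul_le_mul_left _ (Nat.pow_sub_le_descFactorial n b)
    _ = 2 ^ b * (Finset.univ : Finset (Fin b ↪ Fin n)).card := by
        rw [Finset.card_univ, Fintype.card_embedding_eq, Fintype.card_fin, Fintype.card_fin]
    _ ≤ 2 ^ b * (b ^ b * ((Finset.univ : Finset (Fin b ↪ Fin n)).image (embSubgraph H)).card) :=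
        Nat.mul_le_mul_left _ key
    _ ≤ 2 ^ b * (b ^ b * Γ.card) :=
        Nat.mul_le_mul_left _ (Nat.mul_le_mul_left _ (Finset.card_le_card himage))
    _ = 2 ^ b * b ^ b * Γ.card := by ring

lemma per_T_bound {n b ℓ : ℕ} {Hj : SimpleGraph (Fin b)} (hb : 0 < b)
    (Γj : Finset ((⊤ : SimpleGraph (Fin n)).Subgraph))
    (hΓj : ∀ B, B ∈ Γj ↔ IsCopy Hj B)
    (T : Finset (Fin n)) (hT : T.card = ℓ) :
    (Γj.filter (fun B => (↑T : Set (Fin n)) ⊆ B.verts)).card ≤ b ^ ℓ * n ^ (b - ℓ) := by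
  rcases Finset.eq_empty_or_nonempty (Γj.filter (fun B => (↑T : Set (Fin n)) ⊆ B.verts))
    with hemp | hne
  · rw [hemp]; simp
  obtain ⟨B₀, hB₀⟩ := hne
  rw [Finset.mem_filter] at hB₀
  obtain ⟨g₀, -, -, -⟩ := ((hΓj B₀).mp hB₀.1).exists_emb
  haveI : Nonempty (Fin n) := ⟨g₀ ⟨0, hb⟩⟩
  refine le_trans ?_ (count_inj_covering T hT)
  apply Finset.card_le_card_of_injOn
    (fun B => if h : IsCopy Hj B then h.exists_emb.choose else Classical.arbitrary _)
  · intro B hB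
    rw [Finset.mem_coe, Finset.mem_filter] at hB
    have h : IsCopy Hj B := (hΓj B).mp hB.1
    simp only [dif_pos h]
    obtain ⟨hinj, hrange, -⟩ := h.exists_emb.choose_spec
    rw [Finset.mem_coe, Finset.mem_filter]
    refine ⟨Finset.mem_univ _, hinj, ?_⟩
    rw [hrange]
    exact hB.2
  · intro B hB B' hB' hBB'
    rw [Finset.mem_coe, Finset.mem_filter] at hB hB'
    have h : IsCopy Hj B := (hΓj B).mp hB.1
    have h' : IsCopy Hj B' := (hΓj B').mp hB'.1
    simp only [dif_pos h, dif_pos h'] at hBB'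
    obtain ⟨-, hrange, hadj⟩ := h.exists_emb.choose_spec
    obtain ⟨-, hrange', hadj'⟩ := h'.exists_emb.choose_spec
    exact copy_ext ⟨hrange, hadj⟩ (hBB' ▸ ⟨hrange', hadj'⟩)

lemma per_A_bound {n a b ℓ : ℕ} {Hj : SimpleGraph (Fin b)} (hb : 0 < b)
    (A : (⊤ : SimpleGraph (Fin n)).Subgraph) (ha : A.verts.ncard = a)
    (Γj : Finset ((⊤ : SimpleGraph (Fin n)).Subgraph))
    (hΓj : ∀ B, B ∈ Γj ↔ IsCopy Hj B) :
    (Γj.filter (fun B => ∃ T : Set (Fin n), T.ncard = ℓ ∧ T ⊆ A.verts ∧ T ⊆ B.verts)).card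
      ≤ 2 ^ a * (b ^ ℓ * n ^ (b - ℓ)) := by
  have hAfin : A.verts.Finite := Set.toFinite _
  set VA : Finset (Fin n) := hAfin.toFinset with hVA
  have hVAcard : VA.card = a := by
    rw [hVA, ← Set.ncard_eq_toFinset_card _ hAfin, ha]
  have hsub : (Γj.filter
        (fun B => ∃ T : Set (Fin n), T.ncard = ℓ ∧ T ⊆ A.verts ∧ T ⊆ B.verts))
      ⊆ (VA.powersetCard ℓ).biUnion
          (fun T => Γj.filter (fun B => (↑T : Set (Fin n)) ⊆ B.verts)) := by
    intro B hB
    rw [Finset.mem_filter] at hB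
    obtain ⟨hBj, T, hTcard, hTA, hTB⟩ := hB
    have hTfin : T.Finite := hAfin.subset hTA
    refine Finset.mem_biUnion.mpr ⟨hTfin.toFinset, ?_, ?_⟩
    · rw [Finset.mem_powersetCard]
      constructor
      · rw [hVA]
        exact Set.Finite.toFinset_subset_toFinset.mpr hTA
      · rw [← Set.ncard_eq_toFinset_card _ hTfin, hTcard]
    · rw [Finset.mem_filter]
      refine ⟨hBj, ?_⟩
      rw [Set.Finite.coe_toFinset]
      exact hTB
  refine (Finset.card_le_card hsub).trans ?_
  refine Finset.card_biUnion_le.trans ?_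
  have hTle : ∀ T ∈ VA.powersetCard ℓ,
      (Γj.filter (fun B => (↑T : Set (Fin n)) ⊆ B.verts)).card ≤ b ^ ℓ * n ^ (b - ℓ) := by
    intro T hT
    exact per_T_bound hb Γj hΓj T (Finset.mem_powersetCard.mp hT).2
  refine (Finset.sum_le_sum hTle).trans ?_
  rw [Finset.sum_const, smul_eq_mul]
  apply Nat.mul_le_mul_right
  rw [Finset.card_powersetCard, hVAcard]
  rcases le_or_gt ℓ a with h | h
  · calc a.choose ℓ ≤ ∑ x ∈ Finset.range (a + 1), a.choose x :=
        Finset.single_le_sum (fun x _ => Nat.zero_le _) (Finset.mem_range.mpr (by omega))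
      _ = 2 ^ a := Nat.sum_range_choose a
  · simp [Nat.choose_eq_zero_of_lt h]

/-! #### Expectation computations -/

noncomputable def edgeFin {n : ℕ} (A : (⊤ : SimpleGraph (Fin n)).Subgraph) :
    Finset {e : Sym2 (Fin n) // ¬ e.IsDiag} :=
  Finset.univ.filter (fun e => (e : Sym2 (Fin n)) ∈ A.edgeSet)

def Ev {n : ℕ} (S : Finset {e : Sym2 (Fin n) // ¬ e.IsDiag}) : Set (EdgeSpace n) :=
  {ω | ∀ e ∈ S, ω e = true}

lemma edgeFin_card {n : ℕ} (A : (⊤ : SimpleGraph (Fin n)).Subgraph) :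
    (edgeFin A).card = A.edgeSet.ncard := by
  have himg : A.edgeSet
      = Subtype.val '' (↑(edgeFin A) : Set {e : Sym2 (Fin n) // ¬ e.IsDiag}) := by
    ext e
    constructor
    · intro he
      have hnd : ¬ e.IsDiag := by
        have := A.edgeSet_subset he
        rwa [SimpleGraph.edgeSet_top] at this
      exact ⟨⟨e, hnd⟩, by simp [edgeFin, he], rfl⟩
    · rintro ⟨⟨e', hnd⟩, he', rfl⟩
      simp only [edgeFin, Finset.coe_filter, Set.mem_setOf_eq] at he'
      exact he'.2
  rw [himg, Set.ncard_image_of_injective _ Subtype.coe_injective, Set.ncard_coe_finset]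

lemma edgeFin_inter {n : ℕ} (A B : (⊤ : SimpleGraph (Fin n)).Subgraph) :
    edgeFin A ∩ edgeFin B = edgeFin (A ⊓ B) := by
  ext e
  simp [edgeFin, SimpleGraph.Subgraph.edgeSet_inf, Set.mem_inter_iff, and_assoc]

lemma event_eq {n : ℕ} (A : (⊤ : SimpleGraph (Fin n)).Subgraph) :
    {ω : EdgeSpace n | A.edgeSet ⊆ (erGraph ω).edgeSet} = Ev (edgeFin A) := by
  ext ω
  simp only [Set.mem_setOf_eq, Ev]
  constructor
  · intro hsub e he
    simp only [edgeFin, Finset.mem_filter, Finset.mem_univ, true_and] at he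
    have := hsub he
    rw [erGraph, SimpleGraph.edgeSet_fromEdgeSet] at this
    obtain ⟨⟨h', hω⟩, -⟩ := this
    convert hω using 2
  · intro hall e he
    have hnd : ¬ e.IsDiag := by
      have := A.edgeSet_subset he
      rwa [SimpleGraph.edgeSet_top] at this
    have hmem : (⟨e, hnd⟩ : {e : Sym2 (Fin n) // ¬ e.IsDiag}) ∈ edgeFin A := by
      simp [edgeFin, he]
    rw [erGraph, SimpleGraph.edgeSet_fromEdgeSet]
    exact ⟨⟨hnd, hall _ hmem⟩, hnd⟩

lemma numCopies_eq_sum {n v' : ℕ} (Hv : SimpleGraph (Fin v'))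
    (Γ : Finset ((⊤ : SimpleGraph (Fin n)).Subgraph)) (hΓ : ∀ B, B ∈ Γ ↔ IsCopy Hv B)
    (ω : EdgeSpace n) :
    (numCopies Hv (erGraph ω) : ℝ) = ∑ A ∈ Γ, (Ev (edgeFin A)).indicator 1 ω := by
  have hset : {B : (⊤ : SimpleGraph (Fin n)).Subgraph |
      IsCopy Hv B ∧ B.edgeSet ⊆ (erGraph ω).edgeSet}
      = ↑(Γ.filter (fun A => ω ∈ Ev (edgeFin A))) := by
    ext B
    simp only [Set.mem_setOf_eq, Finset.coe_filter, hΓ]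
    rw [← event_eq]
    simp
  rw [numCopies, hset, Set.ncard_coe_finset, Finset.card_filter]
  push_cast
  apply Finset.sum_congr rfl
  intro A _
  rw [Set.indicator_apply]
  split <;> simp_all

lemma integral_indicator_Ev {n : ℕ} {q : ℝ} (h0 : 0 ≤ q) (h1 : q ≤ 1)
    (S : Finset {e : Sym2 (Fin n) // ¬ e.IsDiag}) :
    ∫ ω, (Ev S).indicator (1 : EdgeSpace n → ℝ) ω ∂erMeasure n q = q ^ S.card := by
  rw [MeasureTheory.integral_indicator_one (measurableSet_all _)]
  rw [Ev, measureReal_def, erMeasure_allTrue h0 h1]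
  rw [ENNReal.toReal_pow, ENNReal.toReal_ofReal h0]

lemma indicator_Ev_mul {n : ℕ} (S S' : Finset {e : Sym2 (Fin n) // ¬ e.IsDiag})
    (ω : EdgeSpace n) :
    (Ev S).indicator (1 : EdgeSpace n → ℝ) ω * (Ev S').indicator 1 ω
      = (Ev (S ∪ S')).indicator 1 ω := by
  have hiff : ω ∈ Ev (S ∪ S') ↔ ω ∈ Ev S ∧ ω ∈ Ev S' := by
    simp only [Ev, Set.mem_setOf_eq, Finset.mem_union, or_imp, forall_and]
  simp only [Set.indicator_apply, Pi.one_apply]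
  by_cases hS : ω ∈ Ev S <;> by_cases hS' : ω ∈ Ev S' <;>
    simp [hS, hS', hiff]

lemma integral_W {n : ℕ} {q : ℝ} (h0 : 0 ≤ q) (h1 : q ≤ 1) {v' : ℕ} (Hv : SimpleGraph (Fin v'))
    (Γ : Finset ((⊤ : SimpleGraph (Fin n)).Subgraph)) (hΓ : ∀ B, B ∈ Γ ↔ IsCopy Hv B) :
    ∫ ω, (numCopies Hv (erGraph ω) : ℝ) ∂erMeasure n q = Γ.card * q ^ Hv.edgeSet.ncard := by
  rw [MeasureTheory.integral_congr_ae (Filter.Eventually.of_forall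
    (numCopies_eq_sum Hv Γ hΓ))]
  rw [MeasureTheory.integral_finset_sum _ (fun A _ => Integrable.of_finite)]
  have hterm : ∀ A ∈ Γ, ∫ ω, (Ev (edgeFin A)).indicator (1 : EdgeSpace n → ℝ) ω ∂erMeasure n q
      = q ^ Hv.edgeSet.ncard := by
    intro A hA
    rw [integral_indicator_Ev h0 h1, edgeFin_card, ((hΓ A).mp hA).edgeSet_ncard]
  rw [Finset.sum_congr rfl hterm, Finset.sum_const, nsmul_eq_mul]

lemma integral_WW {n : ℕ} {q : ℝ} (h0 : 0 ≤ q) (h1 : q ≤ 1) {vi vj : ℕ}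
    (Hi : SimpleGraph (Fin vi)) (Hj : SimpleGraph (Fin vj))
    (Γi Γj : Finset ((⊤ : SimpleGraph (Fin n)).Subgraph))
    (hΓi : ∀ B, B ∈ Γi ↔ IsCopy Hi B) (hΓj : ∀ B, B ∈ Γj ↔ IsCopy Hj B) :
    ∫ ω, (numCopies Hi (erGraph ω) : ℝ) * (numCopies Hj (erGraph ω) : ℝ) ∂erMeasure n q
      = ∑ A ∈ Γi, ∑ B ∈ Γj, q ^ ((edgeFin A ∪ edgeFin B).card) := by
  have hpt : ∀ ω : EdgeSpace n,
      (numCopies Hi (erGraph ω) : ℝ) * (numCopies Hj (erGraph ω) : ℝ)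
        = ∑ A ∈ Γi, ∑ B ∈ Γj, (Ev (edgeFin A ∪ edgeFin B)).indicator 1 ω := by
    intro ω
    rw [numCopies_eq_sum Hi Γi hΓi ω, numCopies_eq_sum Hj Γj hΓj ω, Finset.sum_mul_sum]
    exact Finset.sum_congr rfl fun A _ => Finset.sum_congr rfl fun B _ =>
      indicator_Ev_mul (edgeFin A) (edgeFin B) ω
  rw [MeasureTheory.integral_congr_ae (Filter.Eventually.of_forall hpt)]
  rw [MeasureTheory.integral_finset_sum _ (fun A _ => Integrable.of_finite)]
  refine Finset.sum_congr rfl fun A _ => ?_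
  rw [MeasureTheory.integral_finset_sum _ (fun B _ => Integrable.of_finite)]
  exact Finset.sum_congr rfl fun B _ => integral_indicator_Ev h0 h1 _

end Aux

/-- The covariance of two subgraph counts is
`O(E(W_i) E(W_j) ∑_{k ∈ K_{i,j}} p^{-k} n^{-ℓ_{k,i,j}})` as `n → ∞` when `p = p(n) → 0`. -/
theorem covariance_subgraph_counts_bound
    (p : ℕ → ℝ) (hp : ∀ n, 0 < p n ∧ p n < 1)
    (hp0 : Tendsto p atTop (nhds 0))
    {d : ℕ} (v : Fin d → ℕ) (H : (i : Fin d) → SimpleGraph (Fin (v i)))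
    (hv : ∀ i, 0 < v i)
    (he : ∀ i, (H i).edgeSet.Nonempty)
    (hnoiso : ∀ i x, ∃ y, (H i).Adj x y)
    (hdist : ∀ i j, i ≠ j → IsEmpty (H i ≃g H j))
    (i j : Fin d) (hji : j < i)
    (W : (n : ℕ) → Fin d → EdgeSpace n → ℕ)
    (hWdef : ∀ n i ω, W n i ω = numCopies (H i) (erGraph ω)) :
    ∃ C > (0 : ℝ), ∀ᶠ n in atTop,
      |(∫ ω, (W n i ω : ℝ) * (W n j ω : ℝ) ∂erMeasure n (p n))
          - (∫ ω, (W n i ω : ℝ) ∂erMeasure n (p n))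
              * ∫ ω, (W n j ω : ℝ) ∂erMeasure n (p n)|
        ≤ C * (∫ ω, (W n i ω : ℝ) ∂erMeasure n (p n))
            * (∫ ω, (W n j ω : ℝ) ∂erMeasure n (p n))
            * ∑ᶠ k ∈ sharedK (H i) (H j) n,
                (p n) ^ (-(k : ℤ)) * (n : ℝ) ^ (-(minSharedVerts (H i) (H j) n k : ℤ)) := by
  classical
  have hb : 0 < v j := hv j
  refine ⟨((2 ^ (v i) * (v j) ^ (v j) * 2 ^ (v j) * (v j) ^ (v j) : ℕ) : ℝ), by positivity, ?_⟩
  set Cn : ℕ := 2 ^ (v i) * (v j) ^ (v j) * 2 ^ (v j) * (v j) ^ (v j) with hCn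
  filter_upwards [Filter.eventually_ge_atTop (2 * v j)] with n hn2b
  obtain ⟨hq0, hq1⟩ := hp n
  haveI : Fintype ((⊤ : SimpleGraph (Fin n)).Subgraph) := Fintype.ofFinite _
  set Γi : Finset ((⊤ : SimpleGraph (Fin n)).Subgraph) :=
    Finset.univ.filter (IsCopy (H i)) with hΓidef
  set Γj : Finset ((⊤ : SimpleGraph (Fin n)).Subgraph) :=
    Finset.univ.filter (IsCopy (H j)) with hΓjdef
  have hΓi : ∀ B, B ∈ Γi ↔ IsCopy (H i) B := by intro B; simp [hΓidef]
  have hΓj : ∀ B, B ∈ Γj ↔ IsCopy (H j) B := by intro B; simp [hΓjdef]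
  set ei := (H i).edgeSet.ncard with hei
  set ej := (H j).edgeSet.ncard with hej
  simp only [hWdef]
  rw [integral_WW hq0.le hq1.le (H i) (H j) Γi Γj hΓi hΓj,
      integral_W hq0.le hq1.le (H i) Γi hΓi, integral_W hq0.le hq1.le (H j) Γj hΓj]
  -- basic cardinality facts about pairs of copies
  have hcardfacts : ∀ A ∈ Γi, ∀ B ∈ Γj,
      (edgeFin A ∪ edgeFin B).card + sharedEdges A B = ei + ej := by
    intro A hA B hB
    have h1 : (edgeFin A).card = ei := by rw [edgeFin_card]; exact ((hΓi A).mp hA).edgeSet_ncard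
    have h2 : (edgeFin B).card = ej := by rw [edgeFin_card]; exact ((hΓj B).mp hB).edgeSet_ncard
    have h3 : (edgeFin A ∩ edgeFin B).card = sharedEdges A B := by
      rw [edgeFin_inter, edgeFin_card]; rfl
    have h4 := Finset.card_union_add_card_inter (edgeFin A) (edgeFin B)
    omega
  -- rewrite the covariance as a sum over pairs
  have hD : (∑ A ∈ Γi, ∑ B ∈ Γj, (p n) ^ (edgeFin A ∪ edgeFin B).card)
      - ((Γi.card : ℝ) * (p n) ^ ei) * ((Γj.card : ℝ) * (p n) ^ ej)
      = ∑ ab ∈ Γi ×ˢ Γj,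
          ((p n) ^ (edgeFin ab.1 ∪ edgeFin ab.2).card - (p n) ^ (ei + ej)) := by
    rw [Finset.sum_sub_distrib, Finset.sum_const, nsmul_eq_mul, Finset.card_product,
      Finset.sum_product]
    dsimp only
    push_cast
    rw [pow_add]
    ring
  rw [hD]
  have hnonneg : ∀ ab ∈ Γi ×ˢ Γj,
      (0:ℝ) ≤ (p n) ^ (edgeFin ab.1 ∪ edgeFin ab.2).card - (p n) ^ (ei + ej) := by
    intro ab hab
    rw [Finset.mem_product] at hab
    have h := hcardfacts ab.1 hab.1 ab.2 hab.2
    have hle : (p n) ^ (ei + ej) ≤ (p n) ^ (edgeFin ab.1 ∪ edgeFin ab.2).card :=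
      pow_le_pow_of_le_one hq0.le hq1.le (by omega)
    linarith
  rw [abs_of_nonneg (Finset.sum_nonneg hnonneg)]
  -- restrict to pairs sharing at least one edge
  set P1 := (Γi ×ˢ Γj).filter (fun ab => 1 ≤ sharedEdges ab.1 ab.2) with hP1
  have hstep1 : ∑ ab ∈ Γi ×ˢ Γj,
        ((p n) ^ (edgeFin ab.1 ∪ edgeFin ab.2).card - (p n) ^ (ei + ej))
      = ∑ ab ∈ P1, ((p n) ^ (edgeFin ab.1 ∪ edgeFin ab.2).card - (p n) ^ (ei + ej)) := by
    rw [hP1]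
    rw [Finset.sum_filter_of_ne]
    intro ab hab hne
    by_contra hk
    push_neg at hk
    have h0 : sharedEdges ab.1 ab.2 = 0 := by omega
    rw [Finset.mem_product] at hab
    have h := hcardfacts ab.1 hab.1 ab.2 hab.2
    have hu : (edgeFin ab.1 ∪ edgeFin ab.2).card = ei + ej := by omega
    rw [hu] at hne
    simp at hne
  rw [hstep1]
  -- membership of shared-edge counts
  have hmaps : ∀ ab ∈ P1, sharedEdges ab.1 ab.2 ∈ Finset.Icc 1 (ei + ej) := by
    intro ab hab
    rw [hP1, Finset.mem_filter] at hab
    have habP := Finset.mem_product.mp hab.1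
    have h := hcardfacts ab.1 habP.1 ab.2 habP.2
    exact Finset.mem_Icc.mpr ⟨hab.2, by omega⟩
  have hstep2 : ∑ ab ∈ P1, ((p n) ^ (edgeFin ab.1 ∪ edgeFin ab.2).card - (p n) ^ (ei + ej))
      ≤ ∑ m ∈ Finset.Icc 1 (ei + ej),
          (((P1.filter (fun ab => sharedEdges ab.1 ab.2 = m)).card : ℝ)
            * (p n) ^ (ei + ej - m)) := by
    have hptwise : ∑ ab ∈ P1,
          ((p n) ^ (edgeFin ab.1 ∪ edgeFin ab.2).card - (p n) ^ (ei + ej))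
        ≤ ∑ ab ∈ P1, (p n) ^ (ei + ej - sharedEdges ab.1 ab.2) := by
      apply Finset.sum_le_sum
      intro ab hab
      rw [hP1, Finset.mem_filter] at hab
      have habP := Finset.mem_product.mp hab.1
      have h := hcardfacts ab.1 habP.1 ab.2 habP.2
      have hu : (edgeFin ab.1 ∪ edgeFin ab.2).card = ei + ej - sharedEdges ab.1 ab.2 := by
        omega
      rw [hu]
      exact sub_le_self _ (pow_nonneg hq0.le _)
    refine hptwise.trans (le_of_eq ?_)
    rw [← Finset.sum_fiberwise_of_maps_to hmaps
      (fun ab => (p n) ^ (ei + ej - sharedEdges ab.1 ab.2))]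
    refine Finset.sum_congr rfl fun m hm => ?_
    rw [Finset.sum_congr rfl (fun ab hab => ?_), Finset.sum_const, nsmul_eq_mul]
    rw [(Finset.mem_filter.mp hab).2]
  refine hstep2.trans ?_
  -- the per-shared-edge-count bound
  have hperm : ∀ m ∈ (Finset.Icc 1 (ei + ej)).filter
      (fun m => (P1.filter (fun ab => sharedEdges ab.1 ab.2 = m)).Nonempty),
      ((((P1.filter (fun ab => sharedEdges ab.1 ab.2 = m)).card : ℝ) * (p n) ^ (ei + ej - m)
        ≤ (Cn : ℝ) * Γi.card * Γj.card * (p n) ^ (ei + ej) *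
            ((p n) ^ (-(m:ℤ)) * (n:ℝ) ^ (-(minSharedVerts (H i) (H j) n m : ℤ))))
      ∧ m ∈ sharedK (H i) (H j) n) := by
    intro m hm
    rw [Finset.mem_filter] at hm
    obtain ⟨hmIcc, ab₀, hab₀⟩ := hm
    rw [Finset.mem_filter] at hab₀
    have hab₀P : ab₀.1 ∈ Γi ∧ ab₀.2 ∈ Γj :=
      Finset.mem_product.mp (Finset.mem_filter.mp hab₀.1).1
    have h1m : 1 ≤ m := (Finset.mem_Icc.mp hmIcc).1
    have hmK : m ∈ sharedK (H i) (H j) n :=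
      ⟨h1m, ab₀.1, ab₀.2, (hΓi _).mp hab₀P.1, (hΓj _).mp hab₀P.2, hab₀.2⟩
    set ℓ := minSharedVerts (H i) (H j) n m with hℓdef
    have hℓle : ∀ ab ∈ P1.filter (fun ab => sharedEdges ab.1 ab.2 = m),
        ℓ ≤ sharedVerts ab.1 ab.2 := by
      intro ab hab
      rw [Finset.mem_filter] at hab
      have habP := Finset.mem_product.mp (Finset.mem_filter.mp hab.1).1
      exact Nat.sInf_le ⟨ab.1, ab.2, (hΓi _).mp habP.1, (hΓj _).mp habP.2, hab.2, rfl⟩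
    have hℓb : ℓ ≤ v j := by
      refine (hℓle ab₀ (Finset.mem_filter.mpr hab₀)).trans ?_
      have h1 : (ab₀.1 ⊓ ab₀.2).support ⊆ ab₀.2.verts :=
        (SimpleGraph.Subgraph.support_subset_verts _).trans
          (by rw [SimpleGraph.Subgraph.verts_inf]; exact Set.inter_subset_right)
      calc sharedVerts ab₀.1 ab₀.2 ≤ ab₀.2.verts.ncard :=
            Set.ncard_le_ncard h1 (Set.toFinite _)
        _ = v j := ((hΓj _).mp hab₀P.2).verts_ncard
    -- natural-number counting bound
    have hsubB : P1.filter (fun ab => sharedEdges ab.1 ab.2 = m)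
        ⊆ Γi.biUnion (fun A => ((Γj.filter (fun B => ∃ T : Set (Fin n),
            T.ncard = ℓ ∧ T ⊆ A.verts ∧ T ⊆ B.verts)).image (fun B => (A, B)))) := by
      intro ab hab
      have hℓv := hℓle ab hab
      rw [Finset.mem_filter] at hab
      have habP := Finset.mem_product.mp (Finset.mem_filter.mp hab.1).1
      refine Finset.mem_biUnion.mpr ⟨ab.1, habP.1, ?_⟩
      obtain ⟨T, hTsub, hTcard⟩ := Set.exists_subset_card_eq hℓv
      have hTA : T ⊆ ab.1.verts := hTsub.trans
        ((SimpleGraph.Subgraph.support_subset_verts _).trans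
          (by rw [SimpleGraph.Subgraph.verts_inf]; exact Set.inter_subset_left))
      have hTB : T ⊆ ab.2.verts := hTsub.trans
        ((SimpleGraph.Subgraph.support_subset_verts _).trans
          (by rw [SimpleGraph.Subgraph.verts_inf]; exact Set.inter_subset_right))
      refine Finset.mem_image.mpr ⟨ab.2, ?_, rfl⟩
      exact Finset.mem_filter.mpr ⟨habP.2, T, hTcard, hTA, hTB⟩
    have hcount : (P1.filter (fun ab => sharedEdges ab.1 ab.2 = m)).card * n ^ ℓ
        ≤ Cn * (Γi.card * Γj.card) := by
      have h1 : (P1.filter (fun ab => sharedEdges ab.1 ab.2 = m)).card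
          ≤ Γi.card * (2 ^ (v i) * ((v j) ^ ℓ * n ^ (v j - ℓ))) := by
        refine (Finset.card_le_card hsubB).trans (Finset.card_biUnion_le.trans ?_)
        have h2 : ∀ A ∈ Γi, ((Γj.filter (fun B => ∃ T : Set (Fin n),
            T.ncard = ℓ ∧ T ⊆ A.verts ∧ T ⊆ B.verts)).image (fun B => (A, B))).card
            ≤ 2 ^ (v i) * ((v j) ^ ℓ * n ^ (v j - ℓ)) := by
          intro A hA
          refine Finset.card_image_le.trans ?_
          exact per_A_bound hb A ((hΓi A).mp hA).verts_ncard Γj hΓj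
        refine (Finset.sum_le_sum h2).trans (le_of_eq ?_)
        rw [Finset.sum_const, smul_eq_mul]
      calc (P1.filter (fun ab => sharedEdges ab.1 ab.2 = m)).card * n ^ ℓ
          ≤ (Γi.card * (2 ^ (v i) * ((v j) ^ ℓ * n ^ (v j - ℓ)))) * n ^ ℓ :=
            Nat.mul_le_mul_right _ h1
        _ = Γi.card * 2 ^ (v i) * (v j) ^ ℓ * (n ^ (v j - ℓ) * n ^ ℓ) := by ring
        _ = Γi.card * 2 ^ (v i) * (v j) ^ ℓ * n ^ (v j) := by
            rw [← pow_add, Nat.sub_add_cancel hℓb]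
        _ ≤ Γi.card * 2 ^ (v i) * (v j) ^ (v j) * (2 ^ (v j) * (v j) ^ (v j) * Γj.card) := by
            refine Nat.mul_le_mul ?_ (copies_lower (H j) hb hn2b Γj hΓj)
            exact Nat.mul_le_mul_left _ (Nat.pow_le_pow_right hb hℓb)
        _ = Cn * (Γi.card * Γj.card) := by rw [hCn]; ring
    -- pass to the reals
    have hn0 : 0 < n := by omega
    have hnpow : (0:ℝ) < (n:ℝ) ^ ℓ := by positivity
    have hfibR : (((P1.filter (fun ab => sharedEdges ab.1 ab.2 = m)).card : ℝ))
        ≤ (Cn : ℝ) * ((Γi.card : ℝ) * Γj.card) * ((n:ℝ) ^ ℓ)⁻¹ := by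
      have hcR : (((P1.filter (fun ab => sharedEdges ab.1 ab.2 = m)).card : ℝ)) * (n:ℝ) ^ ℓ
          ≤ (Cn : ℝ) * ((Γi.card : ℝ) * Γj.card) := by
        exact_mod_cast hcount
      calc (((P1.filter (fun ab => sharedEdges ab.1 ab.2 = m)).card : ℝ))
          = (((P1.filter (fun ab => sharedEdges ab.1 ab.2 = m)).card : ℝ)) * (n:ℝ) ^ ℓ
              * ((n:ℝ) ^ ℓ)⁻¹ := by field_simp
        _ ≤ (Cn : ℝ) * ((Γi.card : ℝ) * Γj.card) * ((n:ℝ) ^ ℓ)⁻¹ :=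
            mul_le_mul_of_nonneg_right hcR (by positivity)
    refine ⟨?_, hmK⟩
    have hmle : m ≤ ei + ej := (Finset.mem_Icc.mp hmIcc).2
    have hqpow : (p n) ^ (ei + ej - m) = (p n) ^ (ei + ej) * ((p n) ^ m)⁻¹ := by
      field_simp
      rw [← pow_add, Nat.sub_add_cancel hmle]
    have hz1 : (p n) ^ (-(m:ℤ)) = ((p n) ^ m)⁻¹ := by rw [zpow_neg, zpow_natCast]
    have hz2 : ((n:ℝ)) ^ (-(ℓ:ℤ)) = ((n:ℝ) ^ ℓ)⁻¹ := by rw [zpow_neg, zpow_natCast]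
    rw [hqpow, hz1, hz2]
    calc (((P1.filter (fun ab => sharedEdges ab.1 ab.2 = m)).card : ℝ))
          * ((p n) ^ (ei + ej) * ((p n) ^ m)⁻¹)
        ≤ ((Cn : ℝ) * ((Γi.card : ℝ) * Γj.card) * ((n:ℝ) ^ ℓ)⁻¹)
            * ((p n) ^ (ei + ej) * ((p n) ^ m)⁻¹) := by
          refine mul_le_mul_of_nonneg_right hfibR ?_
          have := hq0
          positivity
      _ = (Cn : ℝ) * Γi.card * Γj.card * (p n) ^ (ei + ej)
            * (((p n) ^ m)⁻¹ * ((n:ℝ) ^ ℓ)⁻¹) := by ring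
  -- restrict the sum to the nonempty fibers and compare with the sharedK sum
  have hKfin : (sharedK (H i) (H j) n).Finite := by
    apply Set.Finite.subset (Set.finite_Icc 1 ei)
    rintro m ⟨h1m, A, B, hA, hB, rfl⟩
    refine Set.mem_Icc.mpr ⟨h1m, ?_⟩
    calc sharedEdges A B ≤ A.edgeSet.ncard :=
        Set.ncard_le_ncard (SimpleGraph.Subgraph.edgeSet_mono inf_le_left) (Set.toFinite _)
      _ = ei := hA.edgeSet_ncard
  have hKsum : ∑ᶠ m ∈ sharedK (H i) (H j) n,
      ((p n) ^ (-(m:ℤ)) * (n:ℝ) ^ (-(minSharedVerts (H i) (H j) n m : ℤ)))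
      = ∑ m ∈ hKfin.toFinset,
          ((p n) ^ (-(m:ℤ)) * (n:ℝ) ^ (-(minSharedVerts (H i) (H j) n m : ℤ))) := by
    exact finsum_mem_eq_finite_toFinset_sum _ hKfin
  rw [hKsum]
  have hgnonneg : ∀ m : ℕ,
      (0:ℝ) ≤ (p n) ^ (-(m:ℤ)) * (n:ℝ) ^ (-(minSharedVerts (H i) (H j) n m : ℤ)) :=
    fun m => mul_nonneg (zpow_nonneg hq0.le _) (zpow_nonneg (Nat.cast_nonneg n) _)
  calc ∑ m ∈ Finset.Icc 1 (ei + ej),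
        (((P1.filter (fun ab => sharedEdges ab.1 ab.2 = m)).card : ℝ) * (p n) ^ (ei + ej - m))
      = ∑ m ∈ (Finset.Icc 1 (ei + ej)).filter
          (fun m => (P1.filter (fun ab => sharedEdges ab.1 ab.2 = m)).Nonempty),
          (((P1.filter (fun ab => sharedEdges ab.1 ab.2 = m)).card : ℝ)
            * (p n) ^ (ei + ej - m)) := by
        rw [Finset.sum_filter_of_ne]
        intro m hm hne
        have hcard : (P1.filter (fun ab => sharedEdges ab.1 ab.2 = m)).card ≠ 0 := by
          intro h0
          rw [h0] at hne
          simp at hne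
        exact Finset.card_pos.mp (Nat.pos_of_ne_zero hcard)
    _ ≤ ∑ m ∈ (Finset.Icc 1 (ei + ej)).filter
          (fun m => (P1.filter (fun ab => sharedEdges ab.1 ab.2 = m)).Nonempty),
          ((Cn : ℝ) * Γi.card * Γj.card * (p n) ^ (ei + ej) *
            ((p n) ^ (-(m:ℤ)) * (n:ℝ) ^ (-(minSharedVerts (H i) (H j) n m : ℤ)))) :=
        Finset.sum_le_sum fun m hm => (hperm m hm).1
    _ ≤ ∑ m ∈ hKfin.toFinset,
          ((Cn : ℝ) * Γi.card * Γj.card * (p n) ^ (ei + ej) *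
            ((p n) ^ (-(m:ℤ)) * (n:ℝ) ^ (-(minSharedVerts (H i) (H j) n m : ℤ)))) := by
        refine Finset.sum_le_sum_of_subset_of_nonneg ?_ ?_
        · intro m hm
          exact hKfin.mem_toFinset.mpr (hperm m hm).2
        · intro m _ _
          refine mul_nonneg ?_ (hgnonneg m)
          have h1 : (0:ℝ) ≤ (Cn : ℝ) := Nat.cast_nonneg _
          have h2 : (0:ℝ) ≤ (Γi.card : ℝ) := Nat.cast_nonneg _
          have h3 : (0:ℝ) ≤ (Γj.card : ℝ) := Nat.cast_nonneg _
          have h4 : (0:ℝ) ≤ (p n) ^ (ei + ej) := pow_nonneg hq0.le _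
          positivity
    _ = (Cn : ℝ) * ((Γi.card : ℝ) * (p n) ^ ei) * ((Γj.card : ℝ) * (p n) ^ ej)
          * ∑ m ∈ hKfin.toFinset,
            ((p n) ^ (-(m:ℤ)) * (n:ℝ) ^ (-(minSharedVerts (H i) (H j) n m : ℤ))) := by
        rw [Finset.mul_sum]
        refine Finset.sum_congr rfl fun m _ => ?_
        rw [pow_add]
        ring
end
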